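/- Let f = (α_f, σ_f) ∈ G_n be strongly reversible in G_n and suppose σ_f is an n-cycle (its cycle through some element is all of {1,…,n}). Then f^{2n} = identity; in particular f has finite order. -/

import Mathlib

abbrev Circle1 : Type := AddCircle (1 : ℝ)

abbrev Gn (n : ℕ) : Type := (Fin n → Circle1) × Equiv.Perm (Fin n)

namespace Gn
variable {n : ℕ}

noncomputable instance : Mul (Gn n) := ⟨fun f g => ⟨fun j => g.1 j + f.1 (g.2 j), f.2 * g.2⟩⟩
noncomputable instance : One (Gn n) := ⟨⟨fun _ => 0, 1⟩⟩
noncomputable instance : Inv (Gn n) := ⟨fun f => ⟨fun j => -f.1 (f.2⁻¹ j), f.2⁻¹⟩⟩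

noncomputable instance : Group (Gn n) where
  mul_assoc f g h := Prod.ext (funext fun j => (add_assoc _ _ _).symm) rfl
  one_mul f := Prod.ext (funext fun j => add_zero _) (one_mul _)
  mul_one f := Prod.ext (funext fun j => zero_add _) (mul_one _)
  inv_mul_cancel f := Prod.ext
    (funext fun j => show f.1 j + -f.1 (f.2⁻¹ (f.2 j)) = 0 by simp)
    (inv_mul_cancel _)

@[simp] lemma mul_fst (f g : Gn n) (j : Fin n) : (f * g).1 j = g.1 j + f.1 (g.2 j) := rfl
@[simp] lemma mul_snd (f g : Gn n) : (f * g).2 = f.2 * g.2 := rfl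
@[simp] lemma one_fst (j : Fin n) : (1 : Gn n).1 j = 0 := rfl
@[simp] lemma one_snd : (1 : Gn n).2 = 1 := rfl
@[simp] lemma inv_fst (f : Gn n) (j : Fin n) : (f⁻¹).1 j = -f.1 (f.2⁻¹ j) := rfl
@[simp] lemma inv_snd (f : Gn n) : (f⁻¹).2 = f.2⁻¹ := rfl


end Gn

/-- A strongly reversible element of `G_n` whose permutation part is an `n`-cycle satisfies
`f^(2n) = 1`; in particular it has finite order. -/

lemma Gn.pow_snd' {n : ℕ} (f : Gn n) (m : ℕ) : (f ^ m).2 = f.2 ^ m := by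
  induction m with
  | zero => rfl
  | succ m ih => rw [pow_succ, Gn.mul_snd, ih, pow_succ]

lemma Gn.pow_fst' {n : ℕ} (f : Gn n) (m : ℕ) (j : Fin n) :
    (f ^ m).1 j = ∑ k ∈ Finset.range m, f.1 ((f.2 ^ k) j) := by
  induction m generalizing j with
  | zero => simp
  | succ m ih =>
    rw [pow_succ, Gn.mul_fst, ih, Finset.sum_range_succ']
    simp [pow_succ, Equiv.Perm.mul_apply, add_comm]

theorem stmt6 {n : ℕ} (f : Gn n)
    (hcycle : ∃ i : Fin n, ∀ j : Fin n, ∃ k : ℤ, (f.2 ^ k) i = j)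
    (hsr : ∃ T : Gn n, T * T = 1 ∧ T * f * T⁻¹ = f⁻¹) :
    f ^ (2 * n) = 1 := by

  classical
  obtain ⟨i, hi⟩ := hcycle
  -- Step 1: f.2 ^ n = 1
  have hn1 : f.2 ^ n = 1 := by
    rcases eq_or_ne f.2 1 with h1 | h1
    · rw [h1, one_pow]
    · obtain ⟨x, hx⟩ : ∃ x, f.2 x ≠ x := by
        by_contra h; push_neg at h; exact h1 (Equiv.ext h)
      have hfix : ∀ y, f.2 y ≠ y := by
        intro y hy
        obtain ⟨k, hk⟩ := hi y
        have hiy : i = y := by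
          have h2 : (f.2 ^ (-k)) ((f.2 ^ k) i) = (f.2 ^ (-k)) y := congrArg _ hk
          rwa [← Equiv.Perm.mul_apply, ← zpow_add, neg_add_cancel, zpow_zero,
            Equiv.Perm.one_apply,
            Equiv.Perm.zpow_apply_eq_self_of_apply_eq_self hy] at h2
        obtain ⟨m, hm⟩ := hi x
        have : x = i := by
          rw [← hm, Equiv.Perm.zpow_apply_eq_self_of_apply_eq_self (hiy ▸ hy)]
        exact hx (by rw [this, hiy, hy])
      have hcyc : f.2.IsCycle := ⟨x, hx, fun y _ => ((show Equiv.Perm.SameCycle f.2 i x from hi x).symm.trans (hi y))⟩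
      have hsupp : f.2.support = Finset.univ := by
        ext y; simp [Equiv.Perm.mem_support, hfix y]
      have horder : orderOf f.2 = n := by
        rw [hcyc.orderOf, hsupp, Finset.card_univ, Fintype.card_fin]
      have := pow_orderOf_eq_one f.2
      rwa [horder] at this
  -- Step 2: the translation part of f ^ n is constant
  set s : Fin n → Circle1 := fun j => ∑ k ∈ Finset.range n, f.1 ((f.2 ^ k) j) with hs_def
  have hstep : ∀ j, s (f.2 j) = s j := by
    intro j
    have h1 : ∀ k : ℕ, f.1 ((f.2 ^ k) (f.2 j)) = f.1 ((f.2 ^ (k + 1)) j) := by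
      intro k; rw [pow_succ, Equiv.Perm.mul_apply]
    have hA := Finset.sum_range_succ' (fun k => f.1 ((f.2 ^ k) j)) n
    have hB := Finset.sum_range_succ (fun k => f.1 ((f.2 ^ k) j)) n
    have h2 : s (f.2 j) + f.1 ((f.2 ^ 0) j)
        = s j + f.1 ((f.2 ^ n) j) := by
      simp only [hs_def]
      rw [Finset.sum_congr rfl (fun k _ => h1 k)]
      exact hA.symm.trans hB
    have h3 : f.1 ((f.2 ^ n) j) = f.1 ((f.2 ^ 0) j) := by rw [hn1, pow_zero]
    rw [h3] at h2
    exact add_right_cancel h2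
  have hstep' : ∀ j, s (f.2⁻¹ j) = s j := by
    intro j
    have := hstep (f.2⁻¹ j)
    rw [← Equiv.Perm.mul_apply, mul_inv_cancel, Equiv.Perm.one_apply] at this
    exact this.symm
  have hzpow : ∀ (k : ℤ) (j : Fin n), s ((f.2 ^ k) j) = s j := by
    intro k
    induction k using Int.induction_on with
    | zero => intro j; rw [zpow_zero]; rfl
    | succ m ih =>
      intro j
      rw [zpow_add, zpow_one, Equiv.Perm.mul_apply]
      rw [ih, hstep]
    | pred m ih =>
      intro j
      rw [sub_eq_add_neg, zpow_add, Equiv.Perm.mul_apply, zpow_neg_one]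
      rw [ih, hstep']
  have hconst : ∀ j, s j = s i := by
    intro j
    obtain ⟨k, hk⟩ := hi j
    rw [← hk, hzpow]
  -- properties of g = f ^ n
  have hgfst : ∀ j, (f ^ n).1 j = s i := by
    intro j; rw [Gn.pow_fst']; exact hconst j
  have hgsnd : (f ^ n).2 = 1 := by rw [Gn.pow_snd', hn1]
  -- Step 3: reversibility forces 2 • s i = 0
  obtain ⟨T, -, hconj⟩ := hsr
  have hconjn : T * f ^ n * T⁻¹ = (f ^ n)⁻¹ := by
    rw [← conj_pow, hconj, inv_pow]
  have hval := congrArg (fun g : Gn n => g.1 i) hconjn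
  simp only [Gn.mul_fst, Gn.inv_fst, Gn.inv_snd, Gn.mul_snd] at hval
  rw [hgfst, hgfst, hgsnd] at hval
  -- hval : T⁻¹-ish expression = - s i ; simplify
  have hcc : s i = - s i := by
    simp only [Equiv.Perm.one_apply] at hval
    rwa [add_comm (s i), neg_add_cancel_left] at hval
  -- Step 4: conclude
  have h2n : f ^ (2 * n) = (f ^ n) * (f ^ n) := by rw [two_mul, pow_add]
  rw [h2n]
  refine Prod.ext (funext fun j => ?_) ?_
  · rw [Gn.mul_fst, hgsnd, Equiv.Perm.one_apply, hgfst, Gn.one_fst]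
    nth_rewrite 1 [hcc]
    exact neg_add_cancel _
  · rw [Gn.mul_snd, hgsnd, one_mul, Gn.one_snd]
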